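/- arXiv:2208.03627 — 2 statements merged into one kernel-verified Lean document; each statement's English description precedes it below -/
import Mathlib

section
/- The function D(t) = ½( t(1 - e^{-2t}) - 2(1 - e^{-t})² ) is strictly positive for all t > 0. -/
noncomputable section

/-- `D(t) = ½( t(1 - e^{-2t}) - 2(1 - e^{-t})² )`. -/
def Dfun (t : ℝ) : ℝ :=
  (t * (1 - Real.exp (-(2 * t))) - 2 * (1 - Real.exp (-t)) ^ 2) / 2

lemma gderiv_pos {x : ℝ} (hx : 0 < x) : 0 < (x - 1) * Real.exp x + 1 := by
  have h1 : -x + 1 < Real.exp (-x) := Real.add_one_lt_exp (by linarith)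
  have h2 : Real.exp (-x) * Real.exp x = 1 := by
    rw [← Real.exp_add]; simp
  nlinarith [Real.exp_pos x]

lemma g_pos {t : ℝ} (ht : 0 < t) :
    0 < t * Real.exp t + t + 2 - 2 * Real.exp t := by
  set g : ℝ → ℝ := fun x => x * Real.exp x + x + 2 - 2 * Real.exp x with hg
  have hderiv : ∀ x : ℝ, HasDerivAt g ((x - 1) * Real.exp x + 1) x := by
    intro x
    have h := ((hasDerivAt_id x).mul (Real.hasDerivAt_exp x)).add
      (hasDerivAt_id x) |>.sub ((Real.hasDerivAt_exp x).const_mul 2)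
    have e : g = fun y => ((id * Real.exp + id - fun y => 2 * Real.exp y : ℝ → ℝ) y) + 2 := by
      funext y; simp [hg]; ring
    rw [e]
    refine (h.add_const 2).congr_deriv ?_
    simp only [id]; ring
  have hmono : StrictMonoOn g (Set.Ici 0) := by
    apply strictMonoOn_of_deriv_pos (convex_Ici 0)
      (fun x _ => (hderiv x).continuousAt.continuousWithinAt)
    intro x hx
    rw [interior_Ici] at hx
    rw [(hderiv x).deriv]
    exact gderiv_pos hx
  have h0 : g 0 = 0 := by simp [hg]
  have := hmono (Set.mem_Ici.2 le_rfl) (Set.mem_Ici.2 ht.le) ht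
  rw [h0] at this
  simpa [hg] using this

/-- `D(t) > 0` for all `t > 0`. -/
theorem Dfun_pos {t : ℝ} (ht : 0 < t) : 0 < Dfun t := by
  have hu : 0 < Real.exp (-t) := Real.exp_pos _
  have hu1 : Real.exp (-t) < 1 := Real.exp_lt_one_iff.2 (by linarith)
  have hsq : Real.exp (-(2 * t)) = Real.exp (-t) * Real.exp (-t) := by
    rw [← Real.exp_add]; ring_nf
  have hinv : Real.exp (-t) * Real.exp t = 1 := by
    rw [← Real.exp_add]; simp
  have hg := g_pos ht
  unfold Dfun
  rw [hsq]
  nlinarith [mul_pos (mul_pos (sub_pos.2 hu1) hu) hg]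

end
end

section
/- If g₀ ∈ L²(ℝ³_v), then for all t > 0, k ≥ 0 and ξ ∈ ℝ³, ‖ |ξ|^k e^{tA(ξ)} g₀ ‖²_{L²_v} ≤ C(k) (1 + t^{-3k}) e^{-4t} ‖g₀‖²_{L²_v}, where A(ξ) = L - 2 - i(v·ξ) and e^{tA(ξ)} is given by the explicit kernel Ĝ₁(t,ξ,v;u). -/
open MeasureTheory Real
open scoped RealInnerProductSpace

noncomputable section

abbrev E3 := EuclideanSpace ℝ (Fin 3)

/-- The Fourier-transformed kinetic Fokker–Planck kernel `Ĝ₁(t,ξ,v;u)`,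
the kernel of the semigroup `e^{tA(ξ)}` with `A(ξ) = L - 2 - i(v·ξ)`. -/
def G1hat (t : ℝ) (ξ v u : E3) : ℂ :=
  (((2 * Real.pi) ^ (-(3 : ℝ)) * (4 / (1 - Real.exp (-(2 * t)))) ^ ((3 : ℝ) / 2) : ℝ) : ℂ) *
    Complex.exp
      (-Complex.I * ((⟪ξ, v + u⟫ * ((1 - Real.exp (-t)) / (1 + Real.exp (-t))) : ℝ) : ℂ)
        - ((2 * Dfun t * ‖ξ‖ ^ 2 / (1 - Real.exp (-(2 * t)))
            + (1 + Real.exp (-(2 * t))) / (4 * (1 - Real.exp (-(2 * t)))) *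
              ‖(2 * Real.exp (-t) / (1 + Real.exp (-(2 * t)))) • v - u‖ ^ 2
            + (1 - Real.exp (-(2 * t))) / (4 * (1 + Real.exp (-(2 * t)))) * ‖v‖ ^ 2
            + 2 * t : ℝ) : ℂ))

open scoped ENNReal

/-! ### Scalar lemmas -/

/-- `h t = t (1 + e^{-t}) - 2 (1 - e^{-t})`. -/
def hfun (t : ℝ) : ℝ := t * (1 + Real.exp (-t)) - 2 * (1 - Real.exp (-t))

lemma hfun_ge_small {t : ℝ} (h0 : 0 ≤ t) (h1 : t ≤ 1) : t ^ 3 / 13 ≤ hfun t := by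
  have hb := Real.exp_bound (x := -t) (by rw [abs_neg, abs_of_nonneg h0]; exact h1) (n := 6)
    (by norm_num)
  have hsum : ∑ m ∈ Finset.range 6, (-t) ^ m / (Nat.factorial m) =
      1 - t + t ^ 2 / 2 - t ^ 3 / 6 + t ^ 4 / 24 - t ^ 5 / 120 := by
    simp [Finset.sum_range_succ, Nat.factorial]
    ring
  rw [hsum, abs_neg, abs_of_nonneg h0] at hb
  have hb' : 1 - t + t ^ 2 / 2 - t ^ 3 / 6 + t ^ 4 / 24 - t ^ 5 / 120
      - t ^ 6 * (7 / (720 * 6)) ≤ Real.exp (-t) := by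
    have h2 := (abs_le.1 hb).1
    have : ((Nat.factorial 6 : ℝ)) = 720 := by norm_num [Nat.factorial]
    rw [this] at h2
    linarith
  unfold hfun
  nlinarith [mul_le_mul_of_nonneg_left hb' (by linarith : (0:ℝ) ≤ t + 2),
    pow_nonneg h0 3, pow_nonneg h0 4, pow_nonneg h0 5,
    mul_nonneg (pow_nonneg h0 3) (by linarith : (0:ℝ) ≤ 1 - t),
    mul_nonneg (pow_nonneg h0 4) (by nlinarith : (0:ℝ) ≤ 108 - 50 * t - 7 * t ^ 2)]

lemma hfun_hasDeriv (t : ℝ) :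
    HasDerivAt hfun (1 + Real.exp (-t) + t * (-Real.exp (-t)) - 2 * Real.exp (-t)) t := by
  have he : HasDerivAt (fun t : ℝ => Real.exp (-t)) (-Real.exp (-t)) t := by
    simpa using (hasDerivAt_neg t).exp
  have h1 : HasDerivAt (fun t : ℝ => t * (1 + Real.exp (-t)))
      (1 * (1 + Real.exp (-t)) + t * (0 + -Real.exp (-t))) t :=
    (hasDerivAt_id t).mul ((hasDerivAt_const t 1).add he)
  have h2 : HasDerivAt (fun t : ℝ => 2 * (1 - Real.exp (-t))) (2 * (0 - -Real.exp (-t))) t :=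
    ((hasDerivAt_const t 1).sub he).const_mul 2
  have : HasDerivAt hfun (1 * (1 + Real.exp (-t)) + t * (0 + -Real.exp (-t))
      - 2 * (0 - -Real.exp (-t))) t := h1.sub h2
  convert this using 1
  ring

lemma hfun_mono : MonotoneOn hfun (Set.Ici 1) := by
  have hdiff : Differentiable ℝ hfun := fun t => (hfun_hasDeriv t).differentiableAt
  apply monotoneOn_of_deriv_nonneg (convex_Ici 1) hdiff.continuous.continuousOn
    hdiff.differentiableOn
  intro x hx
  rw [(hfun_hasDeriv x).deriv]
  have h := Real.add_one_le_exp x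
  have hep : 0 < Real.exp (-x) := Real.exp_pos _
  have h4 : (x + 1) * Real.exp (-x) ≤ Real.exp x * Real.exp (-x) :=
    mul_le_mul_of_nonneg_right h hep.le
  have h5 : Real.exp x * Real.exp (-x) = 1 := by rw [← Real.exp_add]; simp
  nlinarith

lemma hfun_ge {t : ℝ} (ht : 0 < t) : min (t ^ 3) 1 / 13 ≤ hfun t := by
  rcases le_total t 1 with h1 | h1
  · have := hfun_ge_small ht.le h1
    have : min (t ^ 3) 1 ≤ t ^ 3 := min_le_left _ _
    linarith [hfun_ge_small ht.le h1]
  · have h2 : hfun 1 ≤ hfun t := hfun_mono (by simp) (by simpa using h1) h1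
    have h3 : (1:ℝ) ^ 3 / 13 ≤ hfun 1 := hfun_ge_small zero_le_one le_rfl
    have : min (t ^ 3) 1 ≤ 1 := min_le_right _ _
    linarith

lemma exp_neg_lt_one {t : ℝ} (ht : 0 < t) : Real.exp (-t) < 1 := by
  rw [Real.exp_lt_one_iff]; linarith

lemma exp_sq (t : ℝ) : Real.exp (-(2 * t)) = Real.exp (-t) ^ 2 := by
  rw [← Real.exp_nat_mul]; ring_nf

/-- Key ratio bound: `2 D(t)/(1-e^{-2t}) ≥ min(t³,1)/26`. -/
lemma Dfun_ratio {t : ℝ} (ht : 0 < t) :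
    min (t ^ 3) 1 / 26 ≤ 2 * Dfun t / (1 - Real.exp (-(2 * t))) := by
  have hE : Real.exp (-t) < 1 := exp_neg_lt_one ht
  have hEp : 0 < Real.exp (-t) := Real.exp_pos _
  have hsq : Real.exp (-(2 * t)) = Real.exp (-t) ^ 2 := exp_sq t
  have key : 2 * Dfun t / (1 - Real.exp (-(2 * t))) = hfun t / (1 + Real.exp (-t)) := by
    unfold Dfun hfun
    rw [hsq]
    rw [div_eq_div_iff (by nlinarith) (by nlinarith)]
    ring
  rw [key]
  have h1 : min (t ^ 3) 1 / 13 ≤ hfun t := hfun_ge ht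
  have h2 : (0:ℝ) < 1 + Real.exp (-t) := by linarith
  have hmin : 0 < min (t ^ 3) 1 := lt_min (pow_pos ht 3) one_pos
  have hfp : 0 ≤ hfun t := by linarith
  have h3 : hfun t / 2 ≤ hfun t / (1 + Real.exp (-t)) :=
    div_le_div_of_nonneg_left hfp h2 (by linarith)
  linarith

lemma rpow_mul_exp_le {k p y : ℝ} (hk : 0 ≤ k) (hp : 0 < p) (hy : 0 ≤ y) :
    y ^ k * Real.exp (-(p * y)) ≤ (k / p) ^ k := by
  rcases eq_or_lt_of_le hk with rfl | hk
  · simp only [Real.rpow_zero, one_mul]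
    exact Real.exp_le_one_iff.2 (by nlinarith)
  rcases eq_or_lt_of_le hy with rfl | hy
  · rw [Real.zero_rpow (ne_of_gt hk)]
    simpa using Real.rpow_nonneg (by positivity : (0:ℝ) ≤ k / p) k
  have hkp : 0 < k / p := div_pos hk hp
  rw [Real.rpow_def_of_pos hy, Real.rpow_def_of_pos hkp, ← Real.exp_add, Real.exp_le_exp]
  have hq : 0 < p * y / k := by positivity
  have hlog : Real.log (p * y / k) ≤ p * y / k - 1 := Real.log_le_sub_one_of_pos hq
  have hsplit : Real.log y = Real.log (k / p) + Real.log (p * y / k) := by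
    rw [← Real.log_mul (ne_of_gt hkp) (ne_of_gt hq)]
    congr 1
    field_simp
  rw [hsplit]
  have : k * Real.log (p * y / k) ≤ k * (p * y / k - 1) :=
    mul_le_mul_of_nonneg_left hlog hk.le
  have hid : k * (p * y / k - 1) = p * y - k := by field_simp
  nlinarith

/-! ### Gaussian integrals -/

lemma integrable_gaussian_E3 {p : ℝ} (hp : 0 < p) :
    Integrable (fun x : E3 => Real.exp (-(p * ‖x‖ ^ 2))) := by
  have h := (GaussianFourier.integrable_cexp_neg_mul_sq_norm_add (V := E3)
    (b := (p : ℂ)) (by simpa using hp) 0 0).norm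
  apply h.congr
  filter_upwards with v
  rw [Complex.norm_exp]
  congr 1
  simp [Complex.add_re, Complex.mul_re, ← Complex.ofReal_pow]

lemma lintegral_gaussian_shift {p : ℝ} (hp : 0 < p) (z : E3) :
    (∫⁻ x : E3, ENNReal.ofReal (Real.exp (-(p * ‖x - z‖ ^ 2)))) =
      ENNReal.ofReal ((Real.pi / p) ^ ((3:ℝ) / 2)) := by
  have hshift := lintegral_sub_right_eq_self (μ := volume)
    (fun x : E3 => ENNReal.ofReal (Real.exp (-(p * ‖x‖ ^ 2)))) z
  rw [hshift]
  rw [← ofReal_integral_eq_lintegral_ofReal (integrable_gaussian_E3 hp)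
    (Filter.Eventually.of_forall fun x => (Real.exp_pos _).le)]
  congr 1
  have : (fun x : E3 => Real.exp (-(p * ‖x‖ ^ 2))) = fun x : E3 => Real.exp (-p * ‖x‖ ^ 2) := by
    funext x; ring_nf
  rw [this, GaussianFourier.integral_rexp_neg_mul_sq_norm hp]
  norm_num [finrank_euclideanSpace_fin]

/-! ### Kernel coefficient lemmas -/

def aco (t : ℝ) : ℝ := (1 + Real.exp (-(2 * t))) / (4 * (1 - Real.exp (-(2 * t))))
def bco (t : ℝ) : ℝ := (1 - Real.exp (-(2 * t))) / (4 * (1 + Real.exp (-(2 * t))))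
def βco (t : ℝ) : ℝ := 2 * Real.exp (-t) / (1 + Real.exp (-(2 * t)))
def cco (t : ℝ) : ℝ :=
  (2 * Real.pi) ^ (-(3 : ℝ)) * (4 / (1 - Real.exp (-(2 * t)))) ^ ((3 : ℝ) / 2)
def sfun (t : ℝ) (ξ : E3) : ℝ := 2 * Dfun t * ‖ξ‖ ^ 2 / (1 - Real.exp (-(2 * t)))
def C0 : ℝ := (2 * Real.pi) ^ (-(3 : ℝ)) * (16 * Real.pi) ^ ((3 : ℝ) / 2)

lemma one_sub_exp_pos {t : ℝ} (ht : 0 < t) : 0 < 1 - Real.exp (-(2 * t)) := by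
  have : Real.exp (-(2 * t)) < 1 := by rw [Real.exp_lt_one_iff]; linarith
  linarith

lemma aco_pos {t : ℝ} (ht : 0 < t) : 0 < aco t := by
  have h1 := one_sub_exp_pos ht
  have h2 := Real.exp_pos (-(2 * t))
  unfold aco; positivity

lemma bco_pos {t : ℝ} (ht : 0 < t) : 0 < bco t := by
  have h1 := one_sub_exp_pos ht
  have h2 := Real.exp_pos (-(2 * t))
  unfold bco; positivity

lemma βco_nonneg (t : ℝ) : 0 ≤ βco t := by
  have h2 := Real.exp_pos (-(2 * t))
  have h3 := Real.exp_pos (-t)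
  unfold βco; positivity

lemma βco_le_one (t : ℝ) : βco t ≤ 1 := by
  have h3 := Real.exp_pos (-t)
  have h2 : 0 < 1 + Real.exp (-(2 * t)) := by positivity
  rw [βco, div_le_one h2, exp_sq]
  nlinarith [sq_nonneg (1 - Real.exp (-t))]

lemma aco_identity {t : ℝ} (ht : 0 < t) : aco t * βco t ^ 2 + bco t = aco t := by
  have h1 := one_sub_exp_pos ht
  have h2 := Real.exp_pos (-(2 * t))
  have h3 : 0 < 1 + Real.exp (-(2 * t)) := by positivity
  unfold aco bco βco
  rw [exp_sq] at *
  field_simp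
  ring

lemma cco_pos {t : ℝ} (ht : 0 < t) : 0 < cco t := by
  have h1 := one_sub_exp_pos ht
  have hπ := Real.pi_pos
  unfold cco; positivity

lemma C0_pos : 0 < C0 := by
  have hπ := Real.pi_pos
  unfold C0; positivity

lemma sfun_nonneg {t : ℝ} (ht : 0 < t) (ξ : E3) : 0 ≤ sfun t ξ := by
  have h := Dfun_ratio ht
  have hmin : 0 < min (t ^ 3) 1 := lt_min (pow_pos ht 3) one_pos
  have h2 : 0 ≤ 2 * Dfun t / (1 - Real.exp (-(2 * t))) := by linarith
  unfold sfun
  calc (0:ℝ) ≤ (2 * Dfun t / (1 - Real.exp (-(2 * t)))) * ‖ξ‖ ^ 2 := by positivity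
    _ = 2 * Dfun t * ‖ξ‖ ^ 2 / (1 - Real.exp (-(2 * t))) := by ring

lemma abs_G1hat {t : ℝ} (ht : 0 < t) (ξ v u : E3) :
    ‖G1hat t ξ v u‖ =
      cco t * Real.exp (-(sfun t ξ + aco t * ‖(βco t) • v - u‖ ^ 2
        + bco t * ‖v‖ ^ 2 + 2 * t)) := by
  unfold G1hat
  rw [norm_mul, Complex.norm_real, Real.norm_eq_abs, Complex.norm_exp]
  have h1 := one_sub_exp_pos ht
  have hπ := Real.pi_pos
  have hr : |(2 * Real.pi) ^ (-(3 : ℝ)) * (4 / (1 - Real.exp (-(2 * t)))) ^ ((3 : ℝ) / 2)|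
      = cco t := by
    rw [abs_of_nonneg (by positivity)]; rfl
  rw [hr]
  congr 1
  simp only [Complex.sub_re, Complex.neg_re, Complex.mul_re, Complex.I_re, Complex.I_im,
    Complex.ofReal_re, Complex.ofReal_im, Complex.neg_im]
  unfold sfun aco bco βco
  ring

lemma quad_bound {t : ℝ} (ht : 0 < t) (v u : E3) :
    aco t * ‖v - βco t • u‖ ^ 2 ≤ aco t * ‖(βco t) • v - u‖ ^ 2 + bco t * ‖v‖ ^ 2 := by
  have e1 : ‖(βco t) • v - u‖ ^ 2
      = βco t ^ 2 * ‖v‖ ^ 2 - 2 * (βco t * ⟪v, u⟫) + ‖u‖ ^ 2 := by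
    rw [norm_sub_sq_real, norm_smul, Real.norm_eq_abs, real_inner_smul_left, mul_pow, sq_abs]
  have e2 : ‖v - βco t • u‖ ^ 2
      = ‖v‖ ^ 2 - 2 * (βco t * ⟪v, u⟫) + βco t ^ 2 * ‖u‖ ^ 2 := by
    rw [norm_sub_sq_real, norm_smul, Real.norm_eq_abs, real_inner_smul_right, mul_pow, sq_abs]
  rw [e1, e2]
  have hid := aco_identity ht
  have ha := (aco_pos ht).le
  have hb1 := βco_le_one t
  have hb0 := βco_nonneg t
  nlinarith [sq_nonneg ‖u‖, mul_nonneg ha (sq_nonneg ‖u‖),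
    mul_nonneg (mul_nonneg ha (by nlinarith : (0:ℝ) ≤ 1 - βco t ^ 2)) (sq_nonneg ‖u‖)]

lemma cco_mul_le {t : ℝ} (ht : 0 < t) :
    cco t * (Real.pi / aco t) ^ ((3:ℝ)/2) ≤ C0 := by
  have h1 := one_sub_exp_pos ht
  have hE2 := Real.exp_pos (-(2 * t))
  have hπ := Real.pi_pos
  have ha := aco_pos ht
  unfold cco C0
  rw [mul_assoc]
  apply mul_le_mul_of_nonneg_left _ (by positivity)
  rw [← Real.mul_rpow (by positivity) (by positivity)]
  apply Real.rpow_le_rpow (by positivity) _ (by norm_num)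
  have hkey : 4 / (1 - Real.exp (-(2 * t))) * (Real.pi / aco t)
      = 16 * Real.pi / (1 + Real.exp (-(2 * t))) := by
    unfold aco
    field_simp
    ring
  rw [hkey]
  calc 16 * Real.pi / (1 + Real.exp (-(2 * t))) ≤ 16 * Real.pi / 1 :=
        div_le_div_of_nonneg_left (by positivity) one_pos (by linarith)
    _ = 16 * Real.pi := by ring

lemma exp_bound_row {t : ℝ} (ht : 0 < t) (ξ v u : E3) :
    ‖G1hat t ξ v u‖ ≤ (cco t * Real.exp (-(sfun t ξ + 2 * t)))
      * Real.exp (-(aco t * ‖u - βco t • v‖ ^ 2)) := by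
  rw [abs_G1hat ht, norm_sub_rev]
  rw [mul_assoc, ← Real.exp_add]
  apply mul_le_mul_of_nonneg_left _ (cco_pos ht).le
  apply Real.exp_le_exp.2
  have := bco_pos ht
  nlinarith [sq_nonneg ‖v‖, mul_nonneg this.le (sq_nonneg ‖v‖)]

lemma exp_bound_col {t : ℝ} (ht : 0 < t) (ξ v u : E3) :
    ‖G1hat t ξ v u‖ ≤ (cco t * Real.exp (-(sfun t ξ + 2 * t)))
      * Real.exp (-(aco t * ‖v - βco t • u‖ ^ 2)) := by
  rw [abs_G1hat ht]
  rw [mul_assoc, ← Real.exp_add]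
  apply mul_le_mul_of_nonneg_left _ (cco_pos ht).le
  apply Real.exp_le_exp.2
  have := quad_bound ht v u
  linarith

lemma gauss_factor_le {t : ℝ} (ht : 0 < t) (ξ : E3) :
    cco t * Real.exp (-(sfun t ξ + 2 * t)) * (Real.pi / aco t) ^ ((3:ℝ)/2)
      ≤ C0 * Real.exp (-(sfun t ξ)) * Real.exp (-(2 * t)) := by
  have e1 : Real.exp (-(sfun t ξ + 2 * t))
      = Real.exp (-(sfun t ξ)) * Real.exp (-(2 * t)) := by
    rw [← Real.exp_add]; ring_nf
  have h5 := cco_mul_le ht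
  calc cco t * Real.exp (-(sfun t ξ + 2 * t)) * (Real.pi / aco t) ^ ((3:ℝ)/2)
      = (cco t * (Real.pi / aco t) ^ ((3:ℝ)/2)) * Real.exp (-(sfun t ξ + 2 * t)) := by ring
    _ ≤ C0 * Real.exp (-(sfun t ξ + 2 * t)) :=
        mul_le_mul_of_nonneg_right h5 (Real.exp_pos _).le
    _ = C0 * Real.exp (-(sfun t ξ)) * Real.exp (-(2 * t)) := by rw [e1]; ring

lemma row_bound {t : ℝ} (ht : 0 < t) (ξ v : E3) :
    (∫⁻ u : E3, ENNReal.ofReal (‖G1hat t ξ v u‖)) ≤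
      ENNReal.ofReal (C0 * Real.exp (-(sfun t ξ)) * Real.exp (-(2 * t))) := by
  calc (∫⁻ u : E3, ENNReal.ofReal (‖G1hat t ξ v u‖))
      ≤ ∫⁻ u : E3, ENNReal.ofReal ((cco t * Real.exp (-(sfun t ξ + 2 * t)))
          * Real.exp (-(aco t * ‖u - βco t • v‖ ^ 2))) :=
        lintegral_mono fun u => ENNReal.ofReal_le_ofReal (exp_bound_row ht ξ v u)
    _ = ENNReal.ofReal (cco t * Real.exp (-(sfun t ξ + 2 * t)))
          * ∫⁻ u : E3, ENNReal.ofReal (Real.exp (-(aco t * ‖u - βco t • v‖ ^ 2))) := by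
        rw [← lintegral_const_mul' _ _ ENNReal.ofReal_ne_top]
        apply lintegral_congr
        intro u
        rw [← ENNReal.ofReal_mul (mul_nonneg (cco_pos ht).le (Real.exp_pos _).le)]
    _ = ENNReal.ofReal (cco t * Real.exp (-(sfun t ξ + 2 * t)))
          * ENNReal.ofReal ((Real.pi / aco t) ^ ((3:ℝ)/2)) := by
        rw [lintegral_gaussian_shift (aco_pos ht)]
    _ = ENNReal.ofReal (cco t * Real.exp (-(sfun t ξ + 2 * t)) * (Real.pi / aco t) ^ ((3:ℝ)/2)) := by
        rw [← ENNReal.ofReal_mul (mul_nonneg (cco_pos ht).le (Real.exp_pos _).le)]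
    _ ≤ _ := ENNReal.ofReal_le_ofReal (gauss_factor_le ht ξ)

lemma col_bound {t : ℝ} (ht : 0 < t) (ξ u : E3) :
    (∫⁻ v : E3, ENNReal.ofReal (‖G1hat t ξ v u‖)) ≤
      ENNReal.ofReal (C0 * Real.exp (-(sfun t ξ)) * Real.exp (-(2 * t))) := by
  calc (∫⁻ v : E3, ENNReal.ofReal (‖G1hat t ξ v u‖))
      ≤ ∫⁻ v : E3, ENNReal.ofReal ((cco t * Real.exp (-(sfun t ξ + 2 * t)))
          * Real.exp (-(aco t * ‖v - βco t • u‖ ^ 2))) :=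
        lintegral_mono fun v => ENNReal.ofReal_le_ofReal (exp_bound_col ht ξ v u)
    _ = ENNReal.ofReal (cco t * Real.exp (-(sfun t ξ + 2 * t)))
          * ∫⁻ v : E3, ENNReal.ofReal (Real.exp (-(aco t * ‖v - βco t • u‖ ^ 2))) := by
        rw [← lintegral_const_mul' _ _ ENNReal.ofReal_ne_top]
        apply lintegral_congr
        intro v
        rw [← ENNReal.ofReal_mul (mul_nonneg (cco_pos ht).le (Real.exp_pos _).le)]
    _ = ENNReal.ofReal (cco t * Real.exp (-(sfun t ξ + 2 * t)))
          * ENNReal.ofReal ((Real.pi / aco t) ^ ((3:ℝ)/2)) := by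
        rw [lintegral_gaussian_shift (aco_pos ht)]
    _ = ENNReal.ofReal (cco t * Real.exp (-(sfun t ξ + 2 * t)) * (Real.pi / aco t) ^ ((3:ℝ)/2)) := by
        rw [← ENNReal.ofReal_mul (mul_nonneg (cco_pos ht).le (Real.exp_pos _).le)]
    _ ≤ _ := ENNReal.ofReal_le_ofReal (gauss_factor_le ht ξ)


/-! ### Cauchy-Schwarz for lintegrals -/

lemma lintegral_cauchy_schwarz {α : Type*} [MeasurableSpace α] (μ : Measure α)
    (K g : α → ℝ≥0∞) (hK : AEMeasurable K μ) (hg : AEMeasurable g μ) :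
    (∫⁻ x, K x * g x ∂μ) ^ 2 ≤ (∫⁻ x, K x ∂μ) * ∫⁻ x, K x * g x ^ 2 ∂μ := by
  have hpq : Real.HolderConjugate 2 2 := Real.HolderConjugate.two_two
  have h := ENNReal.lintegral_mul_le_Lp_mul_Lq μ hpq
    (hK.pow_const ((1:ℝ)/2) : AEMeasurable (fun x => K x ^ ((1:ℝ)/2)) μ)
    ((hK.pow_const ((1:ℝ)/2)).mul hg)
  simp only [Pi.mul_apply] at h
  have heq : ∫⁻ a, K a ^ ((1:ℝ)/2) * (K a ^ ((1:ℝ)/2) * g a) ∂μ = ∫⁻ x, K x * g x ∂μ := by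
    apply lintegral_congr
    intro x
    rw [← mul_assoc, ← ENNReal.rpow_add_of_nonneg _ _ (by norm_num) (by norm_num)]
    norm_num
  rw [heq] at h
  have h2 : (fun x => (K x ^ ((1:ℝ)/2)) ^ (2:ℝ)) = fun x => K x := by
    funext x
    rw [← ENNReal.rpow_mul]
    norm_num
  have h3 : (fun x => (K x ^ ((1:ℝ)/2) * g x) ^ (2:ℝ)) = fun x => K x * g x ^ 2 := by
    funext x
    rw [ENNReal.mul_rpow_of_nonneg _ _ (by norm_num : (0:ℝ) ≤ 2), ← ENNReal.rpow_mul,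
      show ((1:ℝ)/2*2) = 1 by norm_num, ENNReal.rpow_one,
      show ((2:ℝ)) = ((2:ℕ):ℝ) by norm_num, ENNReal.rpow_natCast]
  simp only [h2, h3] at h
  calc (∫⁻ x, K x * g x ∂μ) ^ 2
      ≤ ((∫⁻ x, K x ∂μ) ^ ((1:ℝ)/2) * (∫⁻ x, K x * g x ^ 2 ∂μ) ^ ((1:ℝ)/2)) ^ 2 := by
        exact pow_le_pow_left' h 2
    _ = (∫⁻ x, K x ∂μ) * ∫⁻ x, K x * g x ^ 2 ∂μ := by
        rw [mul_pow, ← ENNReal.rpow_natCast (_ ^ _) 2, ← ENNReal.rpow_natCast (_ ^ _) 2,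
          ← ENNReal.rpow_mul, ← ENNReal.rpow_mul]
        norm_num

/-! ### Continuity -/

lemma G1hat_continuous (t : ℝ) (ξ : E3) :
    Continuous fun p : E3 × E3 => G1hat t ξ p.1 p.2 := by
  unfold G1hat
  apply continuous_const.mul
  apply Complex.continuous_exp.comp
  apply Continuous.sub
  · apply continuous_const.mul
    apply Complex.continuous_ofReal.comp
    apply Continuous.mul _ continuous_const
    exact continuous_const.inner (continuous_fst.add continuous_snd)
  · apply Complex.continuous_ofReal.comp
    apply Continuous.add
    apply Continuous.add
    apply Continuous.add continuous_const
    · apply continuous_const.mul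
      exact ((continuous_fst.const_smul (M := ℝ) _).sub continuous_snd).norm.pow 2
    · exact continuous_const.mul (continuous_fst.norm.pow 2)
    · exact continuous_const

/-! ### Weight bound -/

lemma weight_bound {k t : ℝ} (hk : 0 ≤ k) (ht : 0 < t) (ξ : E3) :
    (‖ξ‖ ^ k) ^ 2 * Real.exp (-(sfun t ξ)) ≤ ((26 * k) ^ k + 1) * (1 + t ^ (-(3 * k))) := by
  have hminpos : 0 < min (t ^ 3) 1 := lt_min (pow_pos ht 3) one_pos
  set p : ℝ := min (t ^ 3) 1 / 26 with hp
  have hppos : 0 < p := by positivity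
  have hy : (0:ℝ) ≤ ‖ξ‖ ^ 2 := sq_nonneg _
  have hsq : (‖ξ‖ ^ k) ^ 2 = (‖ξ‖ ^ 2) ^ k := by
    rw [← Real.rpow_natCast (‖ξ‖ ^ k) 2, ← Real.rpow_mul (norm_nonneg ξ),
        ← Real.rpow_natCast ‖ξ‖ 2, ← Real.rpow_mul (norm_nonneg ξ), mul_comm]
  have hps : p * ‖ξ‖ ^ 2 ≤ sfun t ξ := by
    have h1 := Dfun_ratio ht
    have h2 := mul_le_mul_of_nonneg_right h1 hy
    calc p * ‖ξ‖ ^ 2 = (min (t ^ 3) 1 / 26) * ‖ξ‖ ^ 2 := by rw [hp]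
      _ ≤ (2 * Dfun t / (1 - Real.exp (-(2 * t)))) * ‖ξ‖ ^ 2 := h2
      _ = sfun t ξ := by unfold sfun; ring
  have hexp : Real.exp (-(sfun t ξ)) ≤ Real.exp (-(p * ‖ξ‖ ^ 2)) :=
    Real.exp_le_exp.2 (by linarith)
  have hmain : (‖ξ‖ ^ 2) ^ k * Real.exp (-(p * ‖ξ‖ ^ 2)) ≤ (k / p) ^ k :=
    rpow_mul_exp_le hk hppos hy
  have hchain : (‖ξ‖ ^ k) ^ 2 * Real.exp (-(sfun t ξ)) ≤ (k / p) ^ k := by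
    rw [hsq]
    calc (‖ξ‖ ^ 2) ^ k * Real.exp (-(sfun t ξ))
        ≤ (‖ξ‖ ^ 2) ^ k * Real.exp (-(p * ‖ξ‖ ^ 2)) :=
          mul_le_mul_of_nonneg_left hexp (Real.rpow_nonneg hy k)
      _ ≤ (k / p) ^ k := hmain
  have hkp : k / p = 26 * k / min (t ^ 3) 1 := by
    rw [hp]; field_simp
  have h26 : (0:ℝ) ≤ 26 * k := by linarith
  have h26k : (0:ℝ) ≤ (26 * k) ^ k := Real.rpow_nonneg h26 k
  have htk : 0 < t ^ (-(3 * k)) := Real.rpow_pos_of_pos ht _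
  rcases le_total 1 t with h1 | h1
  · have hcube : (0:ℝ) ≤ (t - 1) * (t ^ 2 + t + 1) :=
      mul_nonneg (by linarith) (by nlinarith [sq_nonneg t])
    have hmin1 : min (t ^ 3) 1 = 1 := min_eq_right (by nlinarith)
    rw [hkp, hmin1, div_one] at hchain
    nlinarith
  · have hcube : (0:ℝ) ≤ (1 - t) * (t ^ 2 + t + 1) :=
      mul_nonneg (by linarith) (by nlinarith [sq_nonneg t])
    have hmin1 : min (t ^ 3) 1 = t ^ 3 := min_eq_left (by nlinarith)
    rw [hkp, hmin1] at hchain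
    have hdiv : (26 * k / t ^ 3) ^ k = (26 * k) ^ k * t ^ (-(3 * k)) := by
      rw [Real.div_rpow h26 (by positivity), ← Real.rpow_natCast t 3, ← Real.rpow_mul ht.le,
        div_eq_mul_inv, ← Real.rpow_neg ht.le]
      norm_num
    rw [hdiv] at hchain
    nlinarith

/-! ### Main estimate for strongly measurable data -/

lemma key_estimate {k t : ℝ} (hk : 0 ≤ k) (ht : 0 < t) (ξ : E3) {g₀ : E3 → ℂ}
    (hsm : StronglyMeasurable g₀) (hℒ : MemLp g₀ 2 (volume : Measure E3)) :
    (∫ v : E3, (‖ξ‖ ^ k * ‖∫ u : E3, G1hat t ξ v u * g₀ u‖) ^ 2) ≤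
      (C0 ^ 2 * ((26 * k) ^ k + 1)) * (1 + t ^ (-(3 * k))) * Real.exp (-(4 * t)) *
        ∫ u : E3, ‖g₀ u‖ ^ 2 := by
  have hC0 := C0_pos
  set M : ℝ := C0 * Real.exp (-(sfun t ξ)) * Real.exp (-(2 * t)) with hM
  have hM0 : 0 ≤ M := by
    apply mul_nonneg (mul_nonneg hC0.le (Real.exp_pos _).le) (Real.exp_pos _).le
  set Kf : E3 → E3 → ℝ≥0∞ := fun v u => (‖G1hat t ξ v u‖₊ : ℝ≥0∞) with hKf
  set gf : E3 → ℝ≥0∞ := fun u => (‖g₀ u‖₊ : ℝ≥0∞) with hgf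
  have hcont := G1hat_continuous t ξ
  have hKmeas2 : Measurable fun p : E3 × E3 => Kf p.1 p.2 := hcont.measurable.enorm
  have hKmeasu : ∀ v, Measurable fun u => Kf v u := fun v =>
    ((hcont.comp (Continuous.prodMk_right v)).measurable).enorm
  have hgmeas : Measurable gf := hsm.measurable.enorm
  set G : ℝ := ∫ u : E3, ‖g₀ u‖ ^ 2 with hG
  have hGnn : 0 ≤ G := integral_nonneg fun u => by positivity
  have hGint : Integrable (fun u : E3 => ‖g₀ u‖ ^ 2) := by
    have h2 := hℒ.integrable_norm_rpow (by norm_num) (by norm_num)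
    have he : (fun x : E3 => ‖g₀ x‖ ^ (2:ℝ≥0∞).toReal) = fun x : E3 => ‖g₀ x‖ ^ 2 := by
      funext x
      rw [show ((2:ℝ≥0∞)).toReal = ((2:ℕ):ℝ) by simp, Real.rpow_natCast]
    rwa [he] at h2
  have hGlint : (∫⁻ u : E3, gf u ^ 2) = ENNReal.ofReal G := by
    rw [hG]
    have he : (fun u : E3 => ‖g₀ u‖ ^ 2) = fun u : E3 => ‖g₀ u‖ ^ 2 := by
      funext u; rfl
    rw [he, ofReal_integral_eq_lintegral_ofReal hGint
      (Filter.Eventually.of_forall fun u => by positivity)]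
    apply lintegral_congr
    intro u
    rw [ENNReal.ofReal_pow (norm_nonneg _)]
    exact congrArg (· ^ 2) (ofReal_norm_eq_enorm (g₀ u)).symm
  have hA : ∀ v : E3, (‖(∫ u : E3, G1hat t ξ v u * g₀ u)‖₊ : ℝ≥0∞)
      ≤ ∫⁻ u : E3, Kf v u * gf u := by
    intro v
    calc (‖(∫ u : E3, G1hat t ξ v u * g₀ u)‖₊ : ℝ≥0∞)
        ≤ ∫⁻ u : E3, (‖G1hat t ξ v u * g₀ u‖₊ : ℝ≥0∞) :=
          enorm_integral_le_lintegral_enorm _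
      _ = ∫⁻ u : E3, Kf v u * gf u := by
          apply lintegral_congr
          intro u
          rw [nnnorm_mul]
          push_cast
          rfl
  have hKofReal : ∀ v u : E3, Kf v u = ENNReal.ofReal (‖G1hat t ξ v u‖) := by
    intro v u
    exact (ofReal_norm_eq_enorm _).symm
  have hrowK : ∀ v : E3, (∫⁻ u : E3, Kf v u) ≤ ENNReal.ofReal M := by
    intro v
    calc (∫⁻ u : E3, Kf v u)
        = ∫⁻ u : E3, ENNReal.ofReal (‖G1hat t ξ v u‖) :=
          lintegral_congr (hKofReal v)
      _ ≤ _ := row_bound ht ξ v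
  have hcolK : ∀ u : E3, (∫⁻ v : E3, Kf v u) ≤ ENNReal.ofReal M := by
    intro u
    calc (∫⁻ v : E3, Kf v u)
        = ∫⁻ v : E3, ENNReal.ofReal (‖G1hat t ξ v u‖) :=
          lintegral_congr (fun v => hKofReal v u)
      _ ≤ _ := col_bound ht ξ u
  have hCS : ∀ v : E3, (∫⁻ u : E3, Kf v u * gf u) ^ 2
      ≤ ENNReal.ofReal M * ∫⁻ u : E3, Kf v u * gf u ^ 2 := by
    intro v
    calc (∫⁻ u : E3, Kf v u * gf u) ^ 2
        ≤ (∫⁻ u : E3, Kf v u) * ∫⁻ u : E3, Kf v u * gf u ^ 2 :=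
          lintegral_cauchy_schwarz volume _ _ (hKmeasu v).aemeasurable hgmeas.aemeasurable
      _ ≤ _ := mul_le_mul_left (hrowK v) _
  -- measurability of the v-integrand
  have hAv : AEStronglyMeasurable (fun v : E3 => ∫ u : E3, G1hat t ξ v u * g₀ u) volume := by
    apply StronglyMeasurable.aestronglyMeasurable
    exact (hcont.stronglyMeasurable.mul (hsm.comp_measurable measurable_snd)).integral_prod_right'
  have hfm : AEStronglyMeasurable
      (fun v : E3 => (‖ξ‖ ^ k * ‖∫ u : E3, G1hat t ξ v u * g₀ u‖) ^ 2) volume := by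
    have h1 : AEStronglyMeasurable
        (fun v : E3 => ‖∫ u : E3, G1hat t ξ v u * g₀ u‖) volume := by
      have := hAv.norm
      simpa using this
    have h2 := (aestronglyMeasurable_const (b := ‖ξ‖ ^ k)).mul h1
    have he : (fun v : E3 => (‖ξ‖ ^ k * ‖∫ u : E3, G1hat t ξ v u * g₀ u‖) ^ 2)
        = fun v : E3 => (‖ξ‖ ^ k * ‖∫ u : E3, G1hat t ξ v u * g₀ u‖)
            * (‖ξ‖ ^ k * ‖∫ u : E3, G1hat t ξ v u * g₀ u‖) := by
      funext v; ring
    rw [he]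
    exact h2.mul h2
  rw [integral_eq_lintegral_of_nonneg_ae
    (Filter.Eventually.of_forall fun v => by positivity) hfm]
  have hRHSnn : 0 ≤ (C0 ^ 2 * ((26 * k) ^ k + 1)) * (1 + t ^ (-(3 * k)))
      * Real.exp (-(4 * t)) * G := by
    have h26k : (0:ℝ) ≤ (26 * k) ^ k := Real.rpow_nonneg (by linarith) k
    have htk : 0 < t ^ (-(3 * k)) := Real.rpow_pos_of_pos ht _
    apply mul_nonneg (mul_nonneg (mul_nonneg (by positivity) (by nlinarith)) (Real.exp_pos _).le) hGnn
  apply ENNReal.toReal_le_of_le_ofReal hRHSnn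
  set W : ℝ≥0∞ := ENNReal.ofReal ((‖ξ‖ ^ k) ^ 2) with hW
  have step1 : ∀ v : E3, ENNReal.ofReal ((‖ξ‖ ^ k * ‖∫ u : E3, G1hat t ξ v u * g₀ u‖) ^ 2)
      ≤ W * (∫⁻ u : E3, Kf v u * gf u) ^ 2 := by
    intro v
    rw [mul_pow, ENNReal.ofReal_mul (by positivity)]
    apply mul_le_mul_right
    rw [ENNReal.ofReal_pow (by positivity), ofReal_norm_eq_enorm]
    exact pow_le_pow_left' (hA v) 2
  have hswapmeas : AEMeasurable (Function.uncurry fun v u : E3 => Kf v u * gf u ^ 2)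
      ((volume : Measure E3).prod (volume : Measure E3)) := by
    apply Measurable.aemeasurable
    exact hKmeas2.mul ((hgmeas.comp measurable_snd).pow_const 2)
  have hgf_fin : ∀ u : E3, gf u ^ 2 ≠ ⊤ := fun u => by
    rw [hgf]; exact ENNReal.pow_ne_top ENNReal.coe_ne_top
  calc (∫⁻ v : E3, ENNReal.ofReal ((‖ξ‖ ^ k * ‖∫ u : E3, G1hat t ξ v u * g₀ u‖) ^ 2))
      ≤ ∫⁻ v : E3, W * (∫⁻ u : E3, Kf v u * gf u) ^ 2 := lintegral_mono step1
    _ = W * ∫⁻ v : E3, (∫⁻ u : E3, Kf v u * gf u) ^ 2 :=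
        lintegral_const_mul' _ _ ENNReal.ofReal_ne_top
    _ ≤ W * ∫⁻ v : E3, (ENNReal.ofReal M * ∫⁻ u : E3, Kf v u * gf u ^ 2) :=
        mul_le_mul_right (lintegral_mono fun v => hCS v) _
    _ = W * (ENNReal.ofReal M * ∫⁻ v : E3, ∫⁻ u : E3, Kf v u * gf u ^ 2) := by
        rw [lintegral_const_mul' _ _ ENNReal.ofReal_ne_top]
    _ = W * (ENNReal.ofReal M * ∫⁻ u : E3, ∫⁻ v : E3, Kf v u * gf u ^ 2) := by
        rw [lintegral_lintegral_swap hswapmeas]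
    _ = W * (ENNReal.ofReal M * ∫⁻ u : E3, (∫⁻ v : E3, Kf v u) * gf u ^ 2) := by
        congr 2
        apply lintegral_congr
        intro u
        rw [lintegral_mul_const' _ _ (hgf_fin u)]
    _ ≤ W * (ENNReal.ofReal M * ∫⁻ u : E3, ENNReal.ofReal M * gf u ^ 2) := by
        apply mul_le_mul_right
        apply mul_le_mul_right
        exact lintegral_mono fun u => mul_le_mul_left (hcolK u) _
    _ = W * (ENNReal.ofReal M * (ENNReal.ofReal M * ENNReal.ofReal G)) := by
        rw [lintegral_const_mul' _ _ ENNReal.ofReal_ne_top, hGlint]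
    _ = ENNReal.ofReal ((‖ξ‖ ^ k) ^ 2 * (M * (M * G))) := by
        rw [ENNReal.ofReal_mul (sq_nonneg (‖ξ‖ ^ k)), ENNReal.ofReal_mul hM0,
          ENNReal.ofReal_mul hM0]
    _ ≤ ENNReal.ofReal ((C0 ^ 2 * ((26 * k) ^ k + 1)) * (1 + t ^ (-(3 * k)))
          * Real.exp (-(4 * t)) * G) := by
        apply ENNReal.ofReal_le_ofReal
        have hw := weight_bound hk ht ξ
        have e4 : Real.exp (-(2 * t)) * Real.exp (-(2 * t)) = Real.exp (-(4 * t)) := by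
          rw [← Real.exp_add]; ring_nf
        have hs0 : 0 ≤ sfun t ξ := sfun_nonneg ht ξ
        have hss : Real.exp (-(sfun t ξ)) * Real.exp (-(sfun t ξ)) ≤ Real.exp (-(sfun t ξ)) := by
          have h1 : Real.exp (-(sfun t ξ)) ≤ 1 := Real.exp_le_one_iff.2 (by linarith)
          nlinarith [Real.exp_pos (-(sfun t ξ))]
        have hxk : (0:ℝ) ≤ (‖ξ‖ ^ k) ^ 2 := sq_nonneg _
        have key : (‖ξ‖ ^ k) ^ 2 * (M * (M * G))
            = ((‖ξ‖ ^ k) ^ 2 * (Real.exp (-(sfun t ξ)) * Real.exp (-(sfun t ξ))))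
              * (C0 ^ 2 * Real.exp (-(4 * t)) * G) := by
          rw [hM, ← e4]; ring
        rw [key]
        have step_a : (‖ξ‖ ^ k) ^ 2 * (Real.exp (-(sfun t ξ)) * Real.exp (-(sfun t ξ)))
            ≤ ((26 * k) ^ k + 1) * (1 + t ^ (-(3 * k))) := by
          calc (‖ξ‖ ^ k) ^ 2 * (Real.exp (-(sfun t ξ)) * Real.exp (-(sfun t ξ)))
              ≤ (‖ξ‖ ^ k) ^ 2 * Real.exp (-(sfun t ξ)) :=
                mul_le_mul_of_nonneg_left hss hxk
            _ ≤ _ := hw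
        calc ((‖ξ‖ ^ k) ^ 2 * (Real.exp (-(sfun t ξ)) * Real.exp (-(sfun t ξ))))
              * (C0 ^ 2 * Real.exp (-(4 * t)) * G)
            ≤ (((26 * k) ^ k + 1) * (1 + t ^ (-(3 * k)))) * (C0 ^ 2 * Real.exp (-(4 * t)) * G) := by
              apply mul_le_mul_of_nonneg_right step_a
              have := Real.exp_pos (-(4 * t))
              positivity
          _ = (C0 ^ 2 * ((26 * k) ^ k + 1)) * (1 + t ^ (-(3 * k))) * Real.exp (-(4 * t)) * G := by
              ring

/-- `‖ |ξ|^k e^{tA(ξ)} g₀ ‖² ≤ C(k) (1 + t^{-3k}) e^{-4t} ‖g₀‖²` in `L²_v`. -/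
theorem semigroup_weighted_L2_bound (k : ℝ) (hk : 0 ≤ k) :
    ∃ C : ℝ, 0 < C ∧ ∀ g₀ : E3 → ℂ, MemLp g₀ 2 (volume : Measure E3) →
      ∀ t : ℝ, 0 < t → ∀ ξ : E3,
        (∫ v : E3, (‖ξ‖ ^ k * ‖∫ u : E3, G1hat t ξ v u * g₀ u‖) ^ 2) ≤
          C * (1 + t ^ (-(3 * k))) * Real.exp (-(4 * t)) *
            ∫ u : E3, ‖g₀ u‖ ^ 2 := by
  refine ⟨C0 ^ 2 * ((26 * k) ^ k + 1), ?_, ?_⟩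
  · have h26k : (0:ℝ) ≤ (26 * k) ^ k := Real.rpow_nonneg (by linarith) k
    have := C0_pos
    nlinarith
  intro g₀ hg₀ t ht ξ
  have hsm := hg₀.aestronglyMeasurable
  set g₁ : E3 → ℂ := hsm.mk g₀ with hg₁def
  have hg₁sm : StronglyMeasurable g₁ := hsm.stronglyMeasurable_mk
  have hae : g₀ =ᵐ[volume] g₁ := hsm.ae_eq_mk
  have hg₁ℒ : MemLp g₁ 2 (volume : Measure E3) := hg₀.ae_eq hae
  have hLHS : (∫ v : E3, (‖ξ‖ ^ k * ‖∫ u : E3, G1hat t ξ v u * g₀ u‖) ^ 2)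
      = ∫ v : E3, (‖ξ‖ ^ k * ‖∫ u : E3, G1hat t ξ v u * g₁ u‖) ^ 2 := by
    apply integral_congr_ae
    apply Filter.Eventually.of_forall
    intro v
    have : (∫ u : E3, G1hat t ξ v u * g₀ u) = ∫ u : E3, G1hat t ξ v u * g₁ u :=
      integral_congr_ae (hae.mono fun u hu => by dsimp only; rw [hu])
    dsimp only
    rw [this]
  have hRHS : (∫ u : E3, ‖g₀ u‖ ^ 2) = ∫ u : E3, ‖g₁ u‖ ^ 2 :=
    integral_congr_ae (hae.mono fun u hu => by dsimp only; rw [hu])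
  rw [hLHS, hRHS]
  exact key_estimate hk ht ξ hg₁sm hg₁ℒ

end
end
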